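/- For a partition λ with at most N parts, the number of standard Young tableaux of shape λ divided by |λ|! equals ∏_{1≤i<j≤N}(λ_i - λ_j + j - i) / ∏_{i=1}^{N} (λ_i + N - i)!. -/

import Mathlib

/-- The number of standard Young tableaux of shape `λ = (lam 0 ≥ lam 1 ≥ …)` with at most `N`
rows: fillings of the cells `{(i,j) : j < lam i}` by `1, …, |λ|`, bijectively, increasing
along rows and down columns. -/
noncomputable def sytCount (N : ℕ) (lam : Fin N → ℕ) : ℕ :=
  Nat.card {T : Fin N × ℕ → ℕ //
    (∀ p : Fin N × ℕ, ¬ p.2 < lam p.1 → T p = 0) ∧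
    Set.BijOn T {p : Fin N × ℕ | p.2 < lam p.1} (Set.Icc 1 (∑ i, lam i)) ∧
    (∀ (i : Fin N) (j j' : ℕ), j < j' → j' < lam i → T (i, j) < T (i, j')) ∧
    (∀ (i i' : Fin N) (j : ℕ), i < i' → j < lam i' → T (i, j) < T (i', j))}

open Finset Polynomial


def CornerAt {N : ℕ} (lam : Fin N → ℕ) (i : Fin N) : Prop :=
  0 < lam i ∧ ∀ j, i < j → lam j < lam i

instance {N : ℕ} (lam : Fin N → ℕ) : DecidablePred (CornerAt lam) := fun _ =>
  instDecidableAnd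

def SYTPred (N : ℕ) (lam : Fin N → ℕ) (T : Fin N × ℕ → ℕ) : Prop :=
  (∀ p : Fin N × ℕ, ¬ p.2 < lam p.1 → T p = 0) ∧
  Set.BijOn T {p : Fin N × ℕ | p.2 < lam p.1} (Set.Icc 1 (∑ i, lam i)) ∧
  (∀ (i : Fin N) (j j' : ℕ), j < j' → j' < lam i → T (i, j) < T (i, j')) ∧
  (∀ (i i' : Fin N) (j : ℕ), i < i' → j < lam i' → T (i, j) < T (i', j))

variable {N : ℕ} {lam : Fin N → ℕ}

lemma lam_le_sum (i : Fin N) : lam i ≤ ∑ i, lam i :=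
  Finset.single_le_sum (fun i _ => Nat.zero_le _) (mem_univ i)

lemma syt_finite (N : ℕ) (lam : Fin N → ℕ) : Finite {T // SYTPred N lam T} := by
  set n := ∑ i, lam i with hn
  have hbound : ∀ (T : {T // SYTPred N lam T}) (p : Fin N × ℕ), T.1 p < n + 1 := by
    rintro ⟨T, hT⟩ p
    show T p < n + 1
    by_cases hp : p.2 < lam p.1
    · have := hT.2.1.mapsTo hp
      rw [Set.mem_Icc] at this
      omega
    · rw [hT.1 p hp]; omega
  have hinj : Function.Injective
      (fun (T : {T // SYTPred N lam T}) => fun (i : Fin N) (j : Fin (n+1)) =>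
        (⟨T.1 (i, j), hbound T (i, j)⟩ : Fin (n+1))) := by
    rintro ⟨T, hT⟩ ⟨T', hT'⟩ h
    ext p
    obtain ⟨i, j⟩ := p
    show T (i, j) = T' (i, j)
    by_cases hp : j < lam i
    · have hj : j < n + 1 := by have := lam_le_sum (lam := lam) i; omega
      have := congrFun (congrFun h i) ⟨j, hj⟩
      simpa using this
    · rw [hT.1 (i, j) hp, hT'.1 (i, j) hp]
  exact Finite.of_injective _ hinj

lemma syt_base (h : ∑ i, lam i = 0) : Nat.card {T // SYTPred N lam T} = 1 := by
  have hlam : ∀ i, lam i = 0 := by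
    intro i
    have := lam_le_sum (lam := lam) i
    omega
  have hD : {p : Fin N × ℕ | p.2 < lam p.1} = ∅ := by
    ext p; simp [hlam]
  have hIcc : Set.Icc 1 (∑ i, lam i) = (∅ : Set ℕ) := by
    rw [h]; exact Set.Icc_eq_empty (by norm_num)
  rw [Nat.card_eq_one_iff_unique]
  constructor
  · constructor
    intro ⟨T, hT⟩ ⟨T', hT'⟩
    ext p
    simp only
    rw [hT.1 p (by simp [hlam]), hT'.1 p (by simp [hlam])]
  · refine ⟨⟨fun _ => 0, ?_, ?_, ?_, ?_⟩⟩
    · intro p _; rfl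
    · rw [hD, hIcc]; exact Set.bijOn_empty _
    · intro i j j' _ hj'; rw [hlam] at hj'; omega
    · intro i i' j _ hj; rw [hlam] at hj; omega

lemma Dupd {i0 : Fin N} (hpos : 1 ≤ lam i0) (p : Fin N × ℕ) :
    p.2 < Function.update lam i0 (lam i0 - 1) p.1 ↔
      (p.2 < lam p.1 ∧ p ≠ (i0, lam i0 - 1)) := by
  obtain ⟨i, j⟩ := p
  by_cases h : i = i0
  · subst h
    rw [Function.update_self]
    simp only [ne_eq, Prod.mk.injEq, not_and, true_implies]
    omega
  · rw [Function.update_of_ne h]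
    simp only [ne_eq, Prod.mk.injEq, not_and]
    exact ⟨fun hj => ⟨hj, fun hi => absurd hi h⟩, fun ⟨hj, _⟩ => hj⟩

lemma upd_le (i0 : Fin N) (i : Fin N) :
    Function.update lam i0 (lam i0 - 1) i ≤ lam i := by
  by_cases h : i = i0
  · subst h; rw [Function.update_self]; omega
  · rw [Function.update_of_ne h]

lemma sum_upd {i0 : Fin N} (h1 : 1 ≤ lam i0) :
    ∑ i, Function.update lam i0 (lam i0 - 1) i = (∑ i, lam i) - 1 := by
  rw [Finset.sum_update_of_mem (mem_univ i0)]
  have h := Finset.add_sum_erase univ lam (mem_univ i0)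
  rw [show univ \ {i0} = univ.erase i0 from by rw [Finset.sdiff_singleton_eq_erase]]
  omega

lemma max_pos (hT : SYTPred N lam T) {p : Fin N × ℕ} (hp : p.2 < lam p.1)
    (hTp : T p = ∑ i, lam i) (hpos : 0 < ∑ i, lam i) :
    CornerAt lam p.1 ∧ p.2 = lam p.1 - 1 := by
  obtain ⟨i0, j0⟩ := p
  simp only at hp hTp ⊢
  constructor
  · constructor
    · omega
    · intro j hj
      by_contra hle
      push_neg at hle
      have hjD : j0 < lam j := by omega
      have h1 := hT.2.2.2 i0 j j0 hj hjD
      have h2 := hT.2.1.mapsTo (show ((j, j0) : Fin N × ℕ).2 < lam (j, j0).1 from hjD)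
      rw [Set.mem_Icc] at h2
      omega
  · by_contra hne
    have hj1 : j0 + 1 < lam i0 := by omega
    have h1 := hT.2.2.1 i0 j0 (j0+1) (by omega) hj1
    have h2 := hT.2.1.mapsTo (show ((i0, j0+1) : Fin N × ℕ).2 < lam (i0, j0+1).1 from hj1)
    rw [Set.mem_Icc] at h2
    omega

lemma toSmaller (hmono : Antitone lam) {i0 : Fin N} (hc : CornerAt lam i0)
    {T : Fin N × ℕ → ℕ} (hT : SYTPred N lam T)
    (hTc : T (i0, lam i0 - 1) = ∑ i, lam i) :
    SYTPred N (Function.update lam i0 (lam i0 - 1))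
      (Function.update T (i0, lam i0 - 1) 0) := by
  have h1 : 1 ≤ lam i0 := hc.1
  set c : Fin N × ℕ := (i0, lam i0 - 1) with hc_def
  set n := ∑ i, lam i with hn
  have hn1 : 1 ≤ n := le_trans h1 (lam_le_sum i0)
  have hn' : ∑ i, Function.update lam i0 (lam i0 - 1) i = n - 1 := sum_upd h1
  have hsetD : {p : Fin N × ℕ | p.2 < Function.update lam i0 (lam i0 - 1) p.1}
      = {p : Fin N × ℕ | p.2 < lam p.1} \ {c} := by
    ext p
    rw [Set.mem_diff, Set.mem_setOf_eq, Set.mem_setOf_eq, Set.mem_singleton_iff]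
    exact Dupd h1 p
  refine ⟨?_, ?_, ?_, ?_⟩
  · intro p hp
    by_cases hpc : p = c
    · subst hpc; rw [Function.update_self]
    · rw [Function.update_of_ne hpc]
      refine hT.1 p fun hD => hp ?_
      exact (Dupd h1 p).mpr ⟨hD, hpc⟩
  · rw [hsetD, hn']
    have hIcc : Set.Icc 1 (n - 1) = Set.Icc 1 n \ {n} := by
      ext m
      rw [Set.mem_diff, Set.mem_Icc, Set.mem_Icc, Set.mem_singleton_iff]
      omega
    rw [hIcc]
    have hcD : c ∈ {p : Fin N × ℕ | p.2 < lam p.1} := by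
      rw [Set.mem_setOf_eq]; show lam i0 - 1 < lam i0; omega
    have hbij : Set.BijOn T ({p : Fin N × ℕ | p.2 < lam p.1} \ {c}) (Set.Icc 1 n \ {n}) := by
      refine ⟨?_, hT.2.1.injOn.mono Set.diff_subset, ?_⟩
      · rintro p ⟨hpD, hpc⟩
        rw [Set.mem_singleton_iff] at hpc
        refine ⟨hT.2.1.mapsTo hpD, ?_⟩
        rw [Set.mem_singleton_iff]
        intro hTpn
        exact hpc (hT.2.1.injOn hpD hcD (by rw [hTpn, hTc]))
      · rintro m ⟨hm, hmn⟩
        rw [Set.mem_singleton_iff] at hmn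
        obtain ⟨p, hpD, hTp⟩ := hT.2.1.surjOn hm
        refine ⟨p, ⟨hpD, ?_⟩, hTp⟩
        rw [Set.mem_singleton_iff]
        rintro rfl
        exact hmn (by rw [← hTp, hTc])
    refine hbij.congr ?_
    rintro p ⟨_, hpc⟩
    rw [Set.mem_singleton_iff] at hpc
    exact (Function.update_of_ne hpc _ _).symm
  · intro i j j' hjj' hj'
    have hq' : ((i, j') : Fin N × ℕ) ≠ c :=
      ((Dupd h1 (i, j')).mp hj').2
    have hq : ((i, j) : Fin N × ℕ) ≠ c :=
      ((Dupd h1 (i, j)).mp (show j < Function.update lam i0 (lam i0 - 1) i by omega)).2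
    rw [Function.update_of_ne hq, Function.update_of_ne hq']
    exact hT.2.2.1 i j j' hjj' (lt_of_lt_of_le hj' (upd_le i0 i))
  · intro i i' j hii' hj
    have hq' : ((i', j) : Fin N × ℕ) ≠ c := ((Dupd h1 (i', j)).mp hj).2
    have hjlam : j < lam i' := lt_of_lt_of_le hj (upd_le i0 i')
    have hq : ((i, j) : Fin N × ℕ) ≠ c := by
      
      intro hcon
      have h1' : i = i0 := congrArg Prod.fst hcon
      have h2' : j = lam i0 - 1 := congrArg Prod.snd hcon
      subst h1'
      have := hc.2 i' hii'
      omega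
    rw [Function.update_of_ne hq, Function.update_of_ne hq']
    exact hT.2.2.2 i i' j hii' hjlam

lemma toBigger (hmono : Antitone lam) {i0 : Fin N} (hc : CornerAt lam i0)
    {T' : Fin N × ℕ → ℕ} (hT' : SYTPred N (Function.update lam i0 (lam i0 - 1)) T') :
    SYTPred N lam (Function.update T' (i0, lam i0 - 1) (∑ i, lam i)) := by
  have h1 : 1 ≤ lam i0 := hc.1
  set c : Fin N × ℕ := (i0, lam i0 - 1) with hc_def
  set n := ∑ i, lam i with hn
  have hn1 : 1 ≤ n := le_trans h1 (lam_le_sum i0)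
  have hn' : ∑ i, Function.update lam i0 (lam i0 - 1) i = n - 1 := sum_upd h1
  have hval : ∀ p : Fin N × ℕ, p.2 < Function.update lam i0 (lam i0 - 1) p.1 →
      1 ≤ T' p ∧ T' p ≤ n - 1 := by
    intro p hp
    have := hT'.2.1.mapsTo hp
    rw [Set.mem_Icc, hn'] at this
    exact this
  have hcD : c.2 < lam c.1 := by show lam i0 - 1 < lam i0; omega
  refine ⟨?_, ⟨?_, ?_, ?_⟩, ?_, ?_⟩
  · intro p hp
    have hpc : p ≠ c := fun h => hp (h ▸ hcD)
    rw [Function.update_of_ne hpc]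
    refine hT'.1 p fun hD => hp (lt_of_lt_of_le hD (upd_le i0 p.1))
  · -- mapsTo
    intro p hp
    by_cases hpc : p = c
    · subst hpc
      rw [Function.update_self, Set.mem_Icc]
      omega
    · rw [Function.update_of_ne hpc, Set.mem_Icc]
      have := hval p ((Dupd h1 p).mpr ⟨hp, hpc⟩)
      omega
  · -- injOn
    intro p hp q hq hpq
    by_cases hpc : p = c <;> by_cases hqc : q = c
    · rw [hpc, hqc]
    · exfalso
      rw [hpc, Function.update_self, Function.update_of_ne hqc] at hpq
      have := hval q ((Dupd h1 q).mpr ⟨hq, hqc⟩)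
      omega
    · exfalso
      rw [hqc, Function.update_self, Function.update_of_ne hpc] at hpq
      have := hval p ((Dupd h1 p).mpr ⟨hp, hpc⟩)
      omega
    · rw [Function.update_of_ne hpc, Function.update_of_ne hqc] at hpq
      exact hT'.2.1.injOn ((Dupd h1 p).mpr ⟨hp, hpc⟩) ((Dupd h1 q).mpr ⟨hq, hqc⟩) hpq
  · -- surjOn
    intro m hm
    rw [Set.mem_Icc] at hm
    by_cases hmn : m = n
    · exact ⟨c, hcD, by rw [Function.update_self, hmn]⟩
    · have hm' : m ∈ Set.Icc 1 (∑ i, Function.update lam i0 (lam i0 - 1) i) := by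
        rw [Set.mem_Icc, hn']
        omega
      obtain ⟨p, hpD, hTp⟩ := hT'.2.1.surjOn hm'
      have hpD' := (Dupd h1 p).mp hpD
      exact ⟨p, hpD'.1, by rw [Function.update_of_ne hpD'.2, hTp]⟩
  · -- rows
    intro i j j' hjj' hj'
    by_cases hq' : ((i, j') : Fin N × ℕ) = c
    · have hq'' := hq'
      rw [hc_def, Prod.mk.injEq] at hq''
      obtain ⟨hij, hjval⟩ := hq''
      have hq : ((i, j) : Fin N × ℕ) ≠ c := by
        
        intro hcon
        have h1' : i = i0 := congrArg Prod.fst hcon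
        have h2' : j = lam i0 - 1 := congrArg Prod.snd hcon
        omega
      rw [hq', Function.update_self, Function.update_of_ne hq]
      have hjD : j < Function.update lam i0 (lam i0 - 1) i := by
        subst hij
        rw [Function.update_self]
        omega
      have := hval (i, j) hjD
      omega
    · have hj'D : j' < Function.update lam i0 (lam i0 - 1) i :=
        (Dupd h1 (i, j')).mpr ⟨hj', hq'⟩
      have hq : ((i, j) : Fin N × ℕ) ≠ c := by
        intro hcon
        have h1' : i = i0 := congrArg Prod.fst hcon
        have h2' : j = lam i0 - 1 := congrArg Prod.snd hcon
        rw [h1'] at hj'D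
        rw [Function.update_self] at hj'D
        omega
      rw [Function.update_of_ne hq, Function.update_of_ne hq']
      exact hT'.2.2.1 i j j' hjj' hj'D
  · -- cols
    intro i i' j hii' hj
    by_cases hq' : ((i', j) : Fin N × ℕ) = c
    · have hq'' := hq'
      rw [hc_def, Prod.mk.injEq] at hq''
      obtain ⟨hi', hjval⟩ := hq''
      have hi_ne : i ≠ i0 := by
        intro h
        rw [h] at hii'
        rw [hi'] at hii'
        exact lt_irrefl _ hii'
      have hq : ((i, j) : Fin N × ℕ) ≠ c := by
        
        intro hcon
        have h1' : i = i0 := congrArg Prod.fst hcon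
        have h2' : j = lam i0 - 1 := congrArg Prod.snd hcon
        exact absurd h1' hi_ne
      rw [hq', Function.update_self, Function.update_of_ne hq]
      have hjD : j < Function.update lam i0 (lam i0 - 1) i := by
        rw [Function.update_of_ne hi_ne]
        have hle : lam i0 ≤ lam i := hmono (by rw [← hi']; exact hii'.le)
        omega
      have := hval (i, j) hjD
      omega
    · have hjD' : j < Function.update lam i0 (lam i0 - 1) i' :=
        (Dupd h1 (i', j)).mpr ⟨hj, hq'⟩
      have hq : ((i, j) : Fin N × ℕ) ≠ c := by
        intro hcon
        have h1' : i = i0 := congrArg Prod.fst hcon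
        have h2' : j = lam i0 - 1 := congrArg Prod.snd hcon
        have hlt := hc.2 i' (by rw [← h1']; exact hii')
        have hjlam : j < lam i' := lt_of_lt_of_le hjD' (upd_le i0 i')
        omega
      rw [Function.update_of_ne hq, Function.update_of_ne hq']
      exact hT'.2.2.2 i i' j hii' hjD'

lemma syt_rec (hmono : Antitone lam) (hpos : 0 < ∑ i, lam i) :
    Nat.card {T // SYTPred N lam T} =
      ∑ i ∈ Finset.univ.filter (CornerAt lam),
        Nat.card {T // SYTPred N (Function.update lam i (lam i - 1)) T} := by
  classical
  set n := ∑ i, lam i with hn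
  let g : (Σ i : {i // CornerAt lam i},
      {T // SYTPred N (Function.update lam i.1 (lam i.1 - 1)) T}) → {T // SYTPred N lam T} :=
    fun x => ⟨Function.update x.2.1 (x.1.1, lam x.1.1 - 1) n, toBigger hmono x.1.2 x.2.2⟩
  have hginj : Function.Injective g := by
    rintro ⟨⟨i0, hc0⟩, ⟨T1, hT1⟩⟩ ⟨⟨i1, hc1⟩, ⟨T2, hT2⟩⟩ hxy
    have hxy' : Function.update T1 (i0, lam i0 - 1) n = Function.update T2 (i1, lam i1 - 1) n :=
      congrArg Subtype.val hxy
    have hii : i0 = i1 := by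
      by_contra hne
      have hne' : ((i1, lam i1 - 1) : Fin N × ℕ) ≠ (i0, lam i0 - 1) :=
        fun h => hne (congrArg Prod.fst h).symm
      have h1 := congrFun hxy' (i1, lam i1 - 1)
      rw [Function.update_of_ne hne', Function.update_self] at h1
      have hD : ((i1, lam i1 - 1) : Fin N × ℕ).2 <
          Function.update lam i0 (lam i0 - 1) ((i1, lam i1 - 1) : Fin N × ℕ).1 := by
        show lam i1 - 1 < Function.update lam i0 (lam i0 - 1) i1
        rw [Function.update_of_ne (fun h => hne h.symm)]
        have := hc1.1
        omega
      have h2 := hT1.2.1.mapsTo hD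
      rw [Set.mem_Icc, sum_upd hc0.1] at h2
      omega
    subst hii
    have hT12 : T1 = T2 := by
      funext p
      by_cases hpc : p = ((i0, lam i0 - 1) : Fin N × ℕ)
      · subst hpc
        have hz : ¬ (lam i0 - 1 < Function.update lam i0 (lam i0 - 1) i0) := by
          rw [Function.update_self]; omega
        rw [hT1.1 _ hz, hT2.1 _ hz]
      · have h3 := congrFun hxy' p
        rwa [Function.update_of_ne hpc, Function.update_of_ne hpc] at h3
    subst hT12
    rfl
  have hgsurj : Function.Surjective g := by
    rintro ⟨T, hT⟩
    have hnIcc : (n : ℕ) ∈ Set.Icc 1 n := Set.mem_Icc.mpr ⟨hpos, le_refl n⟩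
    obtain ⟨p, hpD, hTp⟩ := hT.2.1.surjOn hnIcc
    obtain ⟨i0, j0⟩ := p
    rw [Set.mem_setOf_eq] at hpD
    obtain ⟨hcor, hj⟩ := max_pos hT hpD hTp hpos
    simp only at hcor hj
    subst hj
    refine ⟨⟨⟨i0, hcor⟩, ⟨Function.update T (i0, lam i0 - 1) 0,
      toSmaller hmono hcor hT hTp⟩⟩, ?_⟩
    apply Subtype.ext
    show Function.update (Function.update T (i0, lam i0 - 1) 0) (i0, lam i0 - 1) n = T
    rw [Function.update_idem, ← hTp]
    exact Function.update_eq_self _ _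
  have hcardeq := Nat.card_congr (Equiv.ofBijective g ⟨hginj, hgsurj⟩)
  rw [← hcardeq]
  haveI hfinfib : ∀ i : {i // CornerAt lam i},
      Fintype {T // SYTPred N (Function.update lam i.1 (lam i.1 - 1)) T} := fun i =>
    @Fintype.ofFinite _ (syt_finite _ _)
  rw [Nat.card_eq_fintype_card, Fintype.card_sigma]
  have hstep : ∑ i : {i // CornerAt lam i},
      Fintype.card {T // SYTPred N (Function.update lam i.1 (lam i.1 - 1)) T}
      = ∑ i : {i // CornerAt lam i},
        Nat.card {T // SYTPred N (Function.update lam i.1 (lam i.1 - 1)) T} :=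
    Finset.sum_congr rfl (fun i _ => Nat.card_eq_fintype_card.symm)
  rw [hstep]
  exact (Finset.sum_subtype (Finset.univ.filter (CornerAt lam))
    (fun i => by simp)
    (fun i => Nat.card {T // SYTPred N (Function.update lam i (lam i - 1)) T})).symm


lemma myMonic {ι : Type*} (s : Finset ι) (a : ι → ℝ) :
    (∏ i ∈ s, (X - C (a i))).Monic :=
  monic_prod_of_monic _ _ (fun i _ => monic_X_sub_C (a i))

lemma myNatDegree {ι : Type*} (s : Finset ι) (a : ι → ℝ) :
    (∏ i ∈ s, (X - C (a i))).natDegree = s.card := by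
  rw [natDegree_prod_of_monic _ _ (fun i _ => monic_X_sub_C (a i))]
  simp [natDegree_X_sub_C]

lemma myCoeffTop {ι : Type*} (s : Finset ι) (a : ι → ℝ) :
    (∏ i ∈ s, (X - C (a i))).coeff s.card = 1 := by
  have h := (myMonic s a).coeff_natDegree
  rwa [myNatDegree] at h

lemma myCoeffHigh {ι : Type*} (s : Finset ι) (a : ι → ℝ) {m : ℕ} (hm : s.card < m) :
    (∏ i ∈ s, (X - C (a i))).coeff m = 0 := by
  apply coeff_eq_zero_of_natDegree_lt
  rwa [myNatDegree]

lemma myCoeff1 {ι : Type*} (s : Finset ι) (a : ι → ℝ) (hs : 0 < s.card) :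
    (∏ i ∈ s, (X - C (a i))).coeff (s.card - 1) = -∑ i ∈ s, a i :=
  prod_X_sub_C_coeff_card_pred s a hs

lemma myCoeff2 {ι : Type*} (a : ι → ℝ) :
    ∀ (s : Finset ι), 2 ≤ s.card →
    (∏ i ∈ s, (X - C (a i))).coeff (s.card - 2) =
      ((∑ i ∈ s, a i)^2 - ∑ i ∈ s, (a i)^2) / 2 := by
  intro s
  induction s using Finset.cons_induction with
  | empty => simp
  | cons b s hb ih =>
    intro h2
    rw [Finset.card_cons] at h2
    rw [Finset.prod_cons, Finset.sum_cons, Finset.sum_cons, Finset.card_cons]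
    rcases eq_or_lt_of_le (by omega : 1 ≤ s.card) with h1 | h1
    · obtain ⟨c, rfl⟩ := Finset.card_eq_one.mp h1.symm
      simp only [Finset.prod_singleton, Finset.sum_singleton]
      have h0 : (1:ℕ) + 1 - 2 = 0 := rfl
      rw [Finset.card_singleton, h0, mul_coeff_zero]
      simp only [coeff_sub, coeff_X_zero, coeff_C_zero, zero_sub, neg_mul, neg_neg]
      ring
    · have h2' : 2 ≤ s.card := h1
      have hidx : s.card + 1 - 2 = (s.card - 2) + 1 := by omega
      rw [hidx, sub_mul, coeff_sub, coeff_X_mul, coeff_C_mul]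
      have hidx2 : (s.card - 2) + 1 = s.card - 1 := by omega
      rw [hidx2, myCoeff1 s a (by omega), ih h2']
      ring

lemma sum_eval_div_eq_coeff {N : ℕ} (v : Fin N → ℝ)
    (hv : Function.Injective v) (f : ℝ[X]) (hf : f.degree < N) :
    ∑ i, f.eval (v i) * (∏ j ∈ univ.erase i, (v i - v j))⁻¹ = f.coeff (N - 1) := by
  have hvs : Set.InjOn v (univ : Finset (Fin N)) := fun a _ b _ h => hv h
  have hcard : (univ : Finset (Fin N)).card = N := by simp
  have hfd : f.degree < ((univ : Finset (Fin N)).card : WithBot ℕ) := by rw [hcard]; exact hf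
  have hinterp := Lagrange.eq_interpolate hvs hfd
  have h1 : f.coeff (N - 1) = ∑ i, f.eval (v i) * (Lagrange.basis univ v i).coeff (N - 1) := by
    conv_lhs => rw [hinterp]
    rw [Lagrange.interpolate_apply, finset_sum_coeff]
    exact Finset.sum_congr rfl fun i _ => by rw [coeff_C_mul]
  rw [h1]
  refine Finset.sum_congr rfl fun i _ => ?_
  congr 1
  have hdeg : (Lagrange.basis univ v i).natDegree = N - 1 := by
    rw [Lagrange.natDegree_basis hvs (mem_univ i), hcard]
  have h2 : (Lagrange.basis univ v i).coeff (N - 1) = (Lagrange.basis univ v i).leadingCoeff := by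
    rw [Polynomial.leadingCoeff, hdeg]
  rw [h2, Lagrange.basis, leadingCoeff_prod]
  rw [← Finset.prod_inv_distrib]
  refine Finset.prod_congr rfl fun j hj => ?_
  rw [Lagrange.basisDivisor, leadingCoeff_mul, leadingCoeff_C, (monic_X_sub_C (v j)).leadingCoeff,
    mul_one]


lemma B1aux {N : ℕ} (hN : 2 ≤ N) (v : Fin N → ℝ) (hv : Function.Injective v) :
    ∑ i, v i * (∏ j ∈ univ.erase i, (v i - 1 - v j)) * (∏ j ∈ univ.erase i, (v i - v j))⁻¹
      = (∑ i, v i) - N * (N - 1) / 2 := by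
  have hcard : (univ : Finset (Fin N)).card = N := by simp
  set S := ∑ i, v i with hS
  set Q := ∑ i, (v i)^2 with hQ
  set P := ∏ i, (X - C (v i)) with hP
  set Bp := ∏ i, (X - C (v i + 1)) with hBp
  have hPtop : P.coeff N = 1 := by
    have h := myCoeffTop (univ : Finset (Fin N)) v
    rwa [hcard] at h
  have hPhigh : ∀ m, N < m → P.coeff m = 0 := fun m hm =>
    myCoeffHigh _ _ (by rw [hcard]; exact hm)
  have hP1 : P.coeff (N - 1) = -S := by
    have h := myCoeff1 (univ : Finset (Fin N)) v (by rw [hcard]; omega)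
    rwa [hcard] at h
  have hP2 : P.coeff (N - 2) = (S^2 - Q)/2 := by
    have h := myCoeff2 v (univ : Finset (Fin N)) (by rw [hcard]; exact hN)
    rwa [hcard] at h
  have hsum1 : ∑ i, (v i + 1) = S + N := by
    rw [Finset.sum_add_distrib]; simp [hS, hcard]
  have hsumsq : ∑ i, (v i + 1)^2 = Q + 2*S + N := by
    have h : ∀ i, (v i + 1)^2 = (v i)^2 + 2 * v i + 1 := fun i => by ring
    rw [Finset.sum_congr rfl fun i _ => h i, Finset.sum_add_distrib, Finset.sum_add_distrib,
      ← Finset.mul_sum]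
    simp [hQ, hS, hcard]
  have hBtop : Bp.coeff N = 1 := by
    have h := myCoeffTop (univ : Finset (Fin N)) (fun i => v i + 1)
    rwa [hcard] at h
  have hBhigh : ∀ m, N < m → Bp.coeff m = 0 := fun m hm =>
    myCoeffHigh _ _ (by rw [hcard]; exact hm)
  have hB1 : Bp.coeff (N - 1) = -(S + N) := by
    have h := myCoeff1 (univ : Finset (Fin N)) (fun i => v i + 1) (by rw [hcard]; omega)
    rwa [hcard, hsum1] at h
  have hB2 : Bp.coeff (N - 2) = ((S + N)^2 - (Q + 2*S + N))/2 := by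
    have h := myCoeff2 (fun i => v i + 1) (univ : Finset (Fin N)) (by rw [hcard]; exact hN)
    rwa [hcard, hsum1, hsumsq] at h
  set g := X * Bp with hg
  set r := g - (X - C (N:ℝ)) * P with hr
  have hrc : ∀ k, r.coeff (k+1) = Bp.coeff k - (P.coeff k - N * P.coeff (k+1)) := by
    intro k
    rw [hr, hg, coeff_sub, coeff_X_mul, sub_mul, coeff_sub, coeff_X_mul, coeff_C_mul]
    try ring
  have hrdeg : r.degree < (N : ℕ) := by
    rw [Polynomial.degree_lt_iff_coeff_zero]
    intro m hm
    have hm' : N ≤ m := by exact_mod_cast hm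
    obtain ⟨k, rfl⟩ : ∃ k, m = k + 1 := ⟨m - 1, by omega⟩
    rw [hrc]
    have h3 : k = N - 1 ∨ k = N ∨ N < k := by omega
    rcases h3 with h3 | h3 | h3
    · subst h3
      rw [hB1, hP1, show N - 1 + 1 = N from by omega, hPtop]
      ring
    · subst h3
      rw [hBtop, hPtop, hPhigh _ (by omega)]
      try ring
    · rw [hBhigh _ h3, hPhigh _ h3, hPhigh _ (by omega)]
      ring
  have hreval : ∀ i, r.eval (v i) = g.eval (v i) := by
    intro i
    have hPe : P.eval (v i) = 0 := by
      rw [hP, eval_prod]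
      exact Finset.prod_eq_zero (mem_univ i) (by simp)
    simp [hr, eval_mul, eval_sub, hPe]
  have key := sum_eval_div_eq_coeff v hv r hrdeg
  have hcoeffval : r.coeff (N - 1) = -S + (N:ℝ)*((N:ℝ)-1)/2 := by
    rw [show N - 1 = (N - 2) + 1 from by omega, hrc, hB2, hP2,
      show N - 2 + 1 = N - 1 from by omega, hP1]
    push_cast
    ring
  have hterm : ∀ i, v i * (∏ j ∈ univ.erase i, (v i - 1 - v j)) = - g.eval (v i) := by
    intro i
    rw [hg, eval_mul, eval_X, hBp, eval_prod,
      ← Finset.mul_prod_erase _ (fun j => eval (v i) (X - C (v j + 1))) (mem_univ i)]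
    simp only [eval_sub, eval_X, eval_C]
    rw [Finset.prod_congr rfl (fun j _ => show v i - (v j + 1) = v i - 1 - v j from by ring)]
    ring
  calc ∑ i, v i * (∏ j ∈ univ.erase i, (v i - 1 - v j)) * (∏ j ∈ univ.erase i, (v i - v j))⁻¹
      = ∑ i, -(r.eval (v i) * (∏ j ∈ univ.erase i, (v i - v j))⁻¹) := by
        refine Finset.sum_congr rfl fun i _ => ?_
        rw [hterm i, hreval i]; ring
    _ = -(r.coeff (N - 1)) := by rw [Finset.sum_neg_distrib, key]
    _ = S - (N:ℝ)*((N:ℝ)-1)/2 := by rw [hcoeffval]; ring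

lemma B1 {N : ℕ} (v : Fin N → ℝ) (hv : Function.Injective v) :
    ∑ i, v i * (∏ j ∈ univ.erase i, (v i - 1 - v j)) * (∏ j ∈ univ.erase i, (v i - v j))⁻¹
      = (∑ i, v i) - N * (N - 1) / 2 := by
  match N, v, hv with
  | 0, v, hv => simp
  | 1, v, hv => simp
  | (n+2), v, hv => exact B1aux (by omega) v hv

def xv (N : ℕ) (lam : Fin N → ℕ) : Fin N → ℝ := fun i => ((lam i + (N - 1 - (i : ℕ)) : ℕ) : ℝ)

noncomputable def Fr (N : ℕ) (lam : Fin N → ℕ) : ℝ :=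
  (∏ p ∈ Finset.univ.filter (fun p : Fin N × Fin N => p.1 < p.2),
      ((lam p.1 : ℝ) - (lam p.2 : ℝ) + ((p.2 : ℕ) : ℝ) - ((p.1 : ℕ) : ℝ))) /
    ∏ i : Fin N, ((lam i + (N - 1 - (i : ℕ))).factorial : ℝ)


lemma xv_sub {N : ℕ} (lam : Fin N → ℕ) (p : Fin N × Fin N) :
    xv N lam p.1 - xv N lam p.2 =
      (lam p.1 : ℝ) - (lam p.2 : ℝ) + ((p.2 : ℕ) : ℝ) - ((p.1 : ℕ) : ℝ) := by
  obtain ⟨i, j⟩ := p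
  have hi : (i : ℕ) ≤ N - 1 := by have := i.isLt; omega
  have hj : (j : ℕ) ≤ N - 1 := by have := j.isLt; omega
  have e1 : ((N - 1 - (i : ℕ) : ℕ) : ℝ) = ((N - 1 : ℕ) : ℝ) - (i : ℕ) := Nat.cast_sub hi
  have e2 : ((N - 1 - (j : ℕ) : ℕ) : ℝ) = ((N - 1 : ℕ) : ℝ) - (j : ℕ) := Nat.cast_sub hj
  simp only [xv]
  push_cast [e1, e2]
  ring

lemma Fr_eq {N : ℕ} (lam : Fin N → ℕ) :
    Fr N lam = (∏ p ∈ Finset.univ.filter (fun p : Fin N × Fin N => p.1 < p.2),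
        (xv N lam p.1 - xv N lam p.2)) /
      ∏ i : Fin N, ((lam i + (N - 1 - (i : ℕ))).factorial : ℝ) := by
  rw [Fr]
  congr 1
  exact (Finset.prod_congr rfl fun p _ => xv_sub lam p).symm

lemma xv_strictAnti {N : ℕ} {lam : Fin N → ℕ} (hmono : Antitone lam) :
    ∀ i j : Fin N, i < j → xv N lam j < xv N lam i := by
  intro i j hij
  have h1 : lam j ≤ lam i := hmono hij.le
  have h2 : (j : ℕ) < N := j.isLt
  have h3 : (i : ℕ) < (j : ℕ) := hij
  have h4 : lam j + (N - 1 - (j : ℕ)) < lam i + (N - 1 - (i : ℕ)) := by omega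
  simp only [xv]
  exact_mod_cast h4

lemma xv_inj {N : ℕ} {lam : Fin N → ℕ} (hmono : Antitone lam) :
    Function.Injective (xv N lam) := by
  intro i j h
  rcases lt_trichotomy i j with hij | hij | hij
  · exact absurd h (xv_strictAnti hmono i j hij).ne'
  · exact hij
  · exact absurd h (xv_strictAnti hmono j i hij).ne

variable {N : ℕ}

lemma prod_involving (i0 : Fin N) (f : Fin N → ℝ) :
    ∏ p ∈ (Finset.univ.filter (fun p : Fin N × Fin N => p.1 < p.2)).filter
        (fun p => p.1 = i0 ∨ p.2 = i0), f (if p.1 = i0 then p.2 else p.1)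
      = ∏ j ∈ Finset.univ.erase i0, f j := by
  refine Finset.prod_nbij' (fun p => if p.1 = i0 then p.2 else p.1)
    (fun j => if i0 < j then (i0, j) else (j, i0)) ?_ ?_ ?_ ?_ ?_
  · intro p hp
    simp only [mem_filter, mem_univ, true_and] at hp
    obtain ⟨hlt, hinv⟩ := hp
    rcases hinv with h | h
    · subst h
      rw [if_pos rfl, mem_erase]
      exact ⟨(ne_of_gt hlt), mem_univ _⟩
    · subst h
      rw [if_neg (ne_of_lt hlt), mem_erase]
      exact ⟨(ne_of_lt hlt), mem_univ _⟩
  · intro j hj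
    rw [mem_erase] at hj
    by_cases h : i0 < j
    · rw [if_pos h]
      simp [h]
    · rw [if_neg h]
      have hji : j < i0 := lt_of_le_of_ne (not_lt.mp h) hj.1
      simp [hji]
  · intro p hp
    simp only [mem_filter, mem_univ, true_and] at hp
    obtain ⟨hlt, hinv⟩ := hp
    rcases hinv with h | h
    · subst h
      rw [if_pos rfl, if_pos hlt]
    · subst h
      rw [if_neg (ne_of_lt hlt), if_neg (not_lt.mpr hlt.le)]
  · intro j hj
    rw [mem_erase] at hj
    by_cases h : i0 < j
    · simp [h]
    · have hji : j < i0 := lt_of_le_of_ne (not_lt.mp h) hj.1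
      simp [h, hj.1]
  · intro p hp
    rfl

variable {N : ℕ}

lemma swap_lemma {lam : Fin N → ℕ} (i0 : Fin N) (hpos : 1 ≤ lam i0) :
    (∏ p ∈ Finset.univ.filter (fun p : Fin N × Fin N => p.1 < p.2),
        (xv N (Function.update lam i0 (lam i0 - 1)) p.1 -
         xv N (Function.update lam i0 (lam i0 - 1)) p.2)) *
      ∏ j ∈ Finset.univ.erase i0, (xv N lam i0 - xv N lam j)
    = (∏ p ∈ Finset.univ.filter (fun p : Fin N × Fin N => p.1 < p.2),
        (xv N lam p.1 - xv N lam p.2)) *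
      ∏ j ∈ Finset.univ.erase i0, (xv N lam i0 - 1 - xv N lam j) := by
  set lam' := Function.update lam i0 (lam i0 - 1) with hlam'
  have hx' : ∀ j, xv N lam' j = if j = i0 then xv N lam i0 - 1 else xv N lam j := by
    intro j
    by_cases h : j = i0
    · subst h
      rw [if_pos rfl]
      simp only [xv, hlam', Function.update_self]
      have h9 : lam j - 1 + (N - 1 - (j:ℕ)) + 1 = lam j + (N - 1 - (j:ℕ)) := by omega
      rw [eq_sub_iff_add_eq]
      exact_mod_cast h9
    · rw [if_neg h]
      simp only [xv, hlam', Function.update_of_ne h]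
  rw [← prod_involving i0 (fun j => xv N lam i0 - xv N lam j),
      ← prod_involving i0 (fun j => xv N lam i0 - 1 - xv N lam j)]
  rw [← Finset.prod_filter_mul_prod_filter_not
        (Finset.univ.filter (fun p : Fin N × Fin N => p.1 < p.2))
        (fun p => p.1 = i0 ∨ p.2 = i0) (fun p => xv N lam' p.1 - xv N lam' p.2),
      ← Finset.prod_filter_mul_prod_filter_not
        (Finset.univ.filter (fun p : Fin N × Fin N => p.1 < p.2))
        (fun p => p.1 = i0 ∨ p.2 = i0) (fun p => xv N lam p.1 - xv N lam p.2)]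
  have hnotinv : ∏ p ∈ (Finset.univ.filter (fun p : Fin N × Fin N => p.1 < p.2)).filter
        (fun p => ¬(p.1 = i0 ∨ p.2 = i0)), (xv N lam' p.1 - xv N lam' p.2)
      = ∏ p ∈ (Finset.univ.filter (fun p : Fin N × Fin N => p.1 < p.2)).filter
        (fun p => ¬(p.1 = i0 ∨ p.2 = i0)), (xv N lam p.1 - xv N lam p.2) := by
    refine Finset.prod_congr rfl fun p hp => ?_
    simp only [mem_filter] at hp
    push_neg at hp
    rw [hx' p.1, hx' p.2, if_neg hp.2.1, if_neg hp.2.2]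
  have hinv : (∏ p ∈ (Finset.univ.filter (fun p : Fin N × Fin N => p.1 < p.2)).filter
        (fun p => p.1 = i0 ∨ p.2 = i0), (xv N lam' p.1 - xv N lam' p.2)) *
      ∏ p ∈ (Finset.univ.filter (fun p : Fin N × Fin N => p.1 < p.2)).filter
        (fun p => p.1 = i0 ∨ p.2 = i0),
        (fun j => xv N lam i0 - xv N lam j) (if p.1 = i0 then p.2 else p.1)
    = (∏ p ∈ (Finset.univ.filter (fun p : Fin N × Fin N => p.1 < p.2)).filter
        (fun p => p.1 = i0 ∨ p.2 = i0), (xv N lam p.1 - xv N lam p.2)) *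
      ∏ p ∈ (Finset.univ.filter (fun p : Fin N × Fin N => p.1 < p.2)).filter
        (fun p => p.1 = i0 ∨ p.2 = i0),
        (fun j => xv N lam i0 - 1 - xv N lam j) (if p.1 = i0 then p.2 else p.1) := by
    rw [← Finset.prod_mul_distrib, ← Finset.prod_mul_distrib]
    refine Finset.prod_congr rfl fun p hp => ?_
    simp only [mem_filter, mem_univ, true_and] at hp
    obtain ⟨hlt, hio⟩ := hp
    dsimp only
    rcases hio with h | h
    · have h2 : p.2 ≠ i0 := by rw [← h]; exact (ne_of_gt hlt)
      rw [hx' p.1, hx' p.2, if_pos h, if_neg h2, if_pos h, h]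
      ring
    · have h1 : p.1 ≠ i0 := by rw [← h]; exact (ne_of_lt hlt)
      rw [hx' p.1, hx' p.2, if_neg h1, if_pos h, if_neg h1, h]
      ring
  rw [hnotinv, mul_right_comm, hinv, mul_right_comm]

lemma fact_update {lam : Fin N → ℕ} (i0 : Fin N) (hpos : 1 ≤ lam i0) :
    (∏ i : Fin N, ((Function.update lam i0 (lam i0 - 1) i + (N - 1 - (i : ℕ))).factorial : ℝ))
      * xv N lam i0 = ∏ i : Fin N, ((lam i + (N - 1 - (i : ℕ))).factorial : ℝ) := by
  rw [← Finset.prod_erase_mul _ _ (mem_univ i0), ← Finset.prod_erase_mul _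
    (fun i => ((lam i + (N - 1 - (i : ℕ))).factorial : ℝ)) (mem_univ i0)]
  have herase : ∏ i ∈ Finset.univ.erase i0,
      ((Function.update lam i0 (lam i0 - 1) i + (N - 1 - (i : ℕ))).factorial : ℝ)
      = ∏ i ∈ Finset.univ.erase i0, ((lam i + (N - 1 - (i : ℕ))).factorial : ℝ) :=
    Finset.prod_congr rfl fun j hj => by rw [Function.update_of_ne (mem_erase.mp hj).1]
  rw [herase, mul_assoc]
  congr 1
  simp only [Function.update_self, xv]
  have h1 : lam i0 - 1 + (N - 1 - (i0:ℕ)) = (lam i0 + (N - 1 - (i0:ℕ))) - 1 := by omega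
  have h2 : 0 < lam i0 + (N - 1 - (i0:ℕ)) := by omega
  rw [h1, mul_comm]
  exact_mod_cast Nat.mul_factorial_pred h2.ne'

lemma Fr_corner {lam : Fin N → ℕ} (hmono : Antitone lam) {i0 : Fin N} (hc : CornerAt lam i0) :
    Fr N (Function.update lam i0 (lam i0 - 1)) =
      xv N lam i0 * (∏ j ∈ Finset.univ.erase i0, (xv N lam i0 - 1 - xv N lam j)) *
        (∏ j ∈ Finset.univ.erase i0, (xv N lam i0 - xv N lam j))⁻¹ * Fr N lam := by
  have hpos := hc.1
  have hw : (∏ j ∈ Finset.univ.erase i0, (xv N lam i0 - xv N lam j)) ≠ 0 := by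
    refine Finset.prod_ne_zero_iff.mpr fun j hj => ?_
    exact sub_ne_zero_of_ne (fun h => (mem_erase.mp hj).1 (xv_inj hmono h).symm)
  have hD : (∏ i : Fin N, ((lam i + (N - 1 - (i:ℕ))).factorial : ℝ)) ≠ 0 :=
    Finset.prod_ne_zero_iff.mpr fun i _ =>
      Nat.cast_ne_zero.mpr (Nat.factorial_ne_zero _)
  have hD' : (∏ i : Fin N,
      ((Function.update lam i0 (lam i0 - 1) i + (N - 1 - (i:ℕ))).factorial : ℝ)) ≠ 0 :=
    Finset.prod_ne_zero_iff.mpr fun i _ =>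
      Nat.cast_ne_zero.mpr (Nat.factorial_ne_zero _)
  have hxpos : xv N lam i0 ≠ 0 := by
    simp only [xv]
    exact_mod_cast (by omega : lam i0 + (N - 1 - (i0:ℕ)) ≠ 0)
  rw [Fr_eq, Fr_eq]
  have hs := swap_lemma i0 hpos
  have hf := fact_update i0 hpos
  field_simp
  linear_combination (∏ i : Fin N, ((lam i + (N - 1 - (i:ℕ))).factorial : ℝ)) * hs -
    (∏ p ∈ Finset.univ.filter (fun p : Fin N × Fin N => p.1 < p.2),
      (xv N lam p.1 - xv N lam p.2)) *
    (∏ j ∈ Finset.univ.erase i0, (xv N lam i0 - 1 - xv N lam j)) * hf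

lemma vanish {lam : Fin N → ℕ} (hmono : Antitone lam) {i0 : Fin N} (hnc : ¬ CornerAt lam i0) :
    xv N lam i0 * (∏ j ∈ Finset.univ.erase i0, (xv N lam i0 - 1 - xv N lam j)) *
      (∏ j ∈ Finset.univ.erase i0, (xv N lam i0 - xv N lam j))⁻¹ = 0 := by
  by_cases hmax : (i0 : ℕ) + 1 < N
  · set j0 : Fin N := ⟨(i0:ℕ)+1, hmax⟩ with hj0
    have hij : i0 < j0 := by rw [Fin.lt_def]; simp [hj0]
    have hji : j0 ≠ i0 := ne_of_gt hij
    have hlam : lam j0 = lam i0 := by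
      rcases Nat.eq_zero_or_pos (lam i0) with h0 | h0
      · have := hmono hij.le; omega
      · rcases not_and_or.mp hnc with h | h
        · omega
        · push_neg at h
          obtain ⟨j, hj, hle⟩ := h
          have hj0j : j0 ≤ j := by rw [Fin.le_def]; simp [hj0]; exact Fin.lt_def.mp hj
          have h1 : lam j ≤ lam j0 := hmono hj0j
          have h2 : lam j0 ≤ lam i0 := hmono hij.le
          omega
    have hfac : xv N lam i0 - 1 - xv N lam j0 = 0 := by
      simp only [xv]
      have e : lam i0 + (N - 1 - (i0:ℕ)) = (lam j0 + (N - 1 - ((j0:ℕ)))) + 1 := by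
        rw [hlam]
        have : (j0:ℕ) = (i0:ℕ) + 1 := rfl
        omega
      rw [sub_sub, add_comm (1:ℝ), ← sub_sub, sub_sub, sub_eq_zero]
      exact_mod_cast e
    rw [Finset.prod_eq_zero (mem_erase.mpr ⟨hji, mem_univ _⟩) hfac]
    rw [mul_zero, zero_mul]
  · have h0 : lam i0 = 0 := by
      by_contra h0
      exact hnc ⟨Nat.pos_of_ne_zero h0,
        fun j hj => absurd (Fin.lt_def.mp hj) (by have := j.isLt; omega)⟩
    have hx0 : xv N lam i0 = 0 := by
      simp only [xv, h0]
      have : N - 1 - (i0:ℕ) = 0 := by omega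
      rw [this]
      norm_num
    rw [hx0, zero_mul, zero_mul]

lemma sum_shift : ∑ i : Fin N, ((N - 1 - (i:ℕ) : ℕ) : ℝ) = N * ((N:ℝ) - 1) / 2 := by
  rcases N with _ | M
  · simp
  · have h : (∑ i ∈ Finset.range (M+1), (M + 1 - 1 - i)) * 2 = (M+1) * (M+1-1) := by
      have hr := Finset.sum_range_reflect (fun i => i) (M+1)
      simp only [Nat.add_sub_cancel] at *
      rw [hr]
      exact Finset.sum_range_id_mul_two (M+1)
    have h2 : ∑ i : Fin (M+1), ((M + 1 - 1 - (i:ℕ) : ℕ) : ℝ)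
        = ((∑ i ∈ Finset.range (M+1), (M + 1 - 1 - i) : ℕ) : ℝ) := by
      rw [Nat.cast_sum]
      exact Fin.sum_univ_eq_sum_range (fun i => ((M + 1 - 1 - i : ℕ) : ℝ)) (M+1)
    rw [h2, eq_div_iff (two_ne_zero)]
    push_cast
    have := congrArg (Nat.cast : ℕ → ℝ) h
    push_cast at this
    linarith

lemma sum_corner {lam : Fin N → ℕ} (hmono : Antitone lam) :
    ∑ i ∈ Finset.univ.filter (CornerAt lam), Fr N (Function.update lam i (lam i - 1))
      = (∑ i, (lam i : ℝ)) * Fr N lam := by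
  have step1 : ∑ i ∈ Finset.univ.filter (CornerAt lam), Fr N (Function.update lam i (lam i - 1))
      = ∑ i ∈ Finset.univ.filter (CornerAt lam),
          (xv N lam i * (∏ j ∈ Finset.univ.erase i, (xv N lam i - 1 - xv N lam j)) *
            (∏ j ∈ Finset.univ.erase i, (xv N lam i - xv N lam j))⁻¹) * Fr N lam :=
    Finset.sum_congr rfl fun i hi => by
      rw [Fr_corner hmono (mem_filter.mp hi).2]
  rw [step1]
  rw [Finset.sum_filter_of_ne (fun i _ hne => by
    by_contra hnc
    exact hne (by rw [vanish hmono hnc, zero_mul]))]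
  rw [← Finset.sum_mul]
  have hB := B1 (xv N lam) (xv_inj hmono)
  have hxsum : ∑ i, xv N lam i
      = (∑ i, (lam i:ℝ)) + ∑ i : Fin N, ((N - 1 - (i:ℕ) : ℕ) : ℝ) := by
    rw [← Finset.sum_add_distrib]
    exact Finset.sum_congr rfl fun i _ => by simp [xv]
  rw [hB, hxsum, sum_shift]
  ring

section Glue

variable {N : ℕ} {lam : Fin N → ℕ}

lemma pairs_double (f : Fin N × Fin N → ℝ) :
    ∏ p ∈ Finset.univ.filter (fun p : Fin N × Fin N => p.1 < p.2), f p
      = ∏ i, ∏ j ∈ Finset.Ioi i, f (i, j) := by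
  rw [← Finset.prod_sigma (univ : Finset (Fin N)) (fun i => Finset.Ioi i)
    (fun x => f (x.1, x.2))]
  refine Finset.prod_nbij' (fun p => ⟨p.1, p.2⟩) (fun x => (x.1, x.2)) ?_ ?_ ?_ ?_ ?_
  · intro p hp
    simp only [mem_filter, mem_univ, true_and] at hp
    simp [Finset.mem_sigma, Finset.mem_Ioi, hp]
  · intro x hx
    simp only [Finset.mem_sigma, Finset.mem_Ioi] at hx
    simp [hx.2]
  · intro p _; rfl
  · intro x _; rfl
  · intro p _; rfl

lemma row_fact (i : Fin N) :
    ∏ j ∈ Finset.Ioi i, ((j : ℕ) - (i : ℕ)) = (N - 1 - (i : ℕ)).factorial := by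
  have h1 : ∏ j ∈ Finset.Ioi i, ((j : ℕ) - (i : ℕ))
      = ∏ m ∈ Finset.Ioc (i : ℕ) (N - 1), (m - (i : ℕ)) := by
    rw [show Finset.Ioc (i : ℕ) (N - 1) = Finset.Ioo (i : ℕ) N from by ext m; simp; omega,
      ← Fin.map_valEmbedding_Ioi, Finset.prod_map]
    rfl
  rw [h1, ← Finset.Ico_add_one_add_one_eq_Ioc, Finset.prod_Ico_eq_prod_range]
  have h2 : N - 1 + 1 - ((i : ℕ) + 1) = N - 1 - (i : ℕ) := by omega
  rw [h2]
  have h3 : ∀ k, ((i : ℕ) + 1 + k) - (i : ℕ) = k + 1 := fun k => by omega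
  rw [Finset.prod_congr rfl (fun k _ => h3 k)]
  exact Finset.prod_range_add_one_eq_factorial _

lemma Fr_base (hlam : ∀ i, lam i = 0) : Fr N lam = 1 := by
  rw [Fr_eq]
  have hx : ∀ i : Fin N, xv N lam i = ((N - 1 - (i : ℕ) : ℕ) : ℝ) := fun i => by
    simp [xv, hlam]
  rw [pairs_double]
  have hrow : ∀ i : Fin N, ∏ j ∈ Finset.Ioi i, (xv N lam i - xv N lam j)
      = (((N - 1 - (i : ℕ)).factorial : ℕ) : ℝ) := by
    intro i
    have step : ∏ j ∈ Finset.Ioi i, (xv N lam i - xv N lam j)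
        = ∏ j ∈ Finset.Ioi i, (((j : ℕ) - (i : ℕ) : ℕ) : ℝ) := by
      refine Finset.prod_congr rfl fun j hj => ?_
      rw [hx i, hx j]
      have hij0 : i < j := Finset.mem_Ioi.mp hj
      have hij : (i : ℕ) < (j : ℕ) := hij0
      have hjN : (j : ℕ) < N := j.isLt
      have hsplit : (N - 1 - (i : ℕ)) = (N - 1 - (j : ℕ)) + ((j : ℕ) - (i : ℕ)) := by omega
      rw [hsplit, Nat.cast_add]
      ring
    rw [step, ← Nat.cast_prod, row_fact]
  rw [Finset.prod_congr rfl (fun i _ => hrow i)]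
  have hden : ∀ i : Fin N, ((lam i + (N - 1 - (i : ℕ))).factorial : ℝ)
      = (((N - 1 - (i : ℕ)).factorial : ℕ) : ℝ) := fun i => by rw [hlam i, zero_add]
  rw [Finset.prod_congr rfl (fun i _ => hden i)]
  refine div_self (Finset.prod_ne_zero_iff.mpr fun i _ => ?_)
  exact_mod_cast (Nat.factorial_ne_zero _)

lemma upd_antitone (hmono : Antitone lam) {i0 : Fin N} (hc : CornerAt lam i0) :
    Antitone (Function.update lam i0 (lam i0 - 1)) := by
  intro a b hab
  by_cases ha : a = i0 <;> by_cases hb : b = i0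
  · subst ha; rw [hb]
  · subst ha
    rw [Function.update_self, Function.update_of_ne hb]
    have hlt : a < b := lt_of_le_of_ne hab (fun h => hb h.symm)
    have := hc.2 b hlt
    omega
  · subst hb
    rw [Function.update_self, Function.update_of_ne ha]
    have := hmono hab
    omega
  · rw [Function.update_of_ne ha, Function.update_of_ne hb]
    exact hmono hab

lemma key_induction : ∀ (n N : ℕ) (lam : Fin N → ℕ), Antitone lam → (∑ i, lam i) = n →
    (Nat.card {T // SYTPred N lam T} : ℝ) = (n.factorial : ℝ) * Fr N lam := by
  intro n
  induction n using Nat.strong_induction_on with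
  | _ n ih =>
    intro N lam hmono hsum
    rcases Nat.eq_zero_or_pos n with rfl | hpos
    · rw [syt_base hsum, Fr_base (fun i => by
        have h := lam_le_sum (lam := lam) i
        omega)]
      simp
    · rw [syt_rec hmono (by omega)]
      rw [Nat.cast_sum]
      have hterm : ∀ i ∈ Finset.univ.filter (CornerAt lam),
          ((Nat.card {T // SYTPred N (Function.update lam i (lam i - 1)) T} : ℕ) : ℝ)
            = ((n-1).factorial : ℝ) * Fr N (Function.update lam i (lam i - 1)) := by
        intro i hi
        have hci := (Finset.mem_filter.mp hi).2
        exact ih (n-1) (by omega) N _ (upd_antitone hmono hci)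
          (by rw [sum_upd hci.1]; omega)
      rw [Finset.sum_congr rfl hterm, ← Finset.mul_sum, sum_corner hmono]
      have hsum' : (∑ i, (lam i : ℝ)) = (n : ℝ) := by
        rw [← Nat.cast_sum, hsum]
      rw [hsum']
      have hfact : ((n-1).factorial : ℝ) * (n : ℝ) = (n.factorial : ℝ) := by
        have := Nat.mul_factorial_pred hpos.ne'
        exact_mod_cast by rw [mul_comm]; exact_mod_cast this
      calc ((n-1).factorial : ℝ) * ((n : ℝ) * Fr N lam)
          = (((n-1).factorial : ℝ) * (n : ℝ)) * Fr N lam := by ring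
        _ = (n.factorial : ℝ) * Fr N lam := by rw [hfact]

end Glue

/-- dimension formula: `dim λ / |λ|! = ∏_{i<j≤N}(λ_i-λ_j+j-i) / ∏_{i=1}^N (λ_i+N-i)!`. -/
theorem stmt4 (N : ℕ) (lam : Fin N → ℕ) (hmono : Antitone lam) :
    (sytCount N lam : ℝ) / ((∑ i, lam i).factorial : ℝ) =
      (∏ p ∈ Finset.univ.filter (fun p : Fin N × Fin N => p.1 < p.2),
          ((lam p.1 : ℝ) - (lam p.2 : ℝ) + ((p.2 : ℕ) : ℝ) - ((p.1 : ℕ) : ℝ))) /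
        ∏ i : Fin N, ((lam i + (N - 1 - (i : ℕ))).factorial : ℝ) := by
  have hcount : sytCount N lam = Nat.card {T // SYTPred N lam T} := rfl
  have h := key_induction (∑ i, lam i) N lam hmono rfl
  rw [hcount, h]
  have hne : (((∑ i, lam i).factorial : ℕ) : ℝ) ≠ 0 := by
    exact_mod_cast (Nat.factorial_ne_zero _)
  rw [mul_comm, mul_div_assoc, div_self hne, mul_one]
  rfl
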